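/- Let w: (a,b) → ℝ be a C¹ weight function with w(a⁺) = w(b⁻) = 0, and let {p_n} be the orthonormal polynomials for w. Define φ_n(x) = √(w(x)) p_n(x). Then the differentiation matrix D with entries D_{m,n} = ∫_a^b φ_m'(x) φ_n(x) dx is skew-symmetric: D_{m,n} + D_{n,m} = 0 for all m, n ∈ ℕ. -/

import Mathlib

open MeasureTheory

theorem stmt4 (a b : ℝ) (hab : a < b) (w : ℝ → ℝ)
    (hw_smooth : ContDiff ℝ 1 w)
    (hw_nonneg : ∀ x ∈ Set.Ioo a b, 0 ≤ w x)
    (hwa : Filter.Tendsto w (nhdsWithin a (Set.Ioi a)) (nhds 0))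
    (hwb : Filter.Tendsto w (nhdsWithin b (Set.Iio b)) (nhds 0))
    (p : ℕ → Polynomial ℝ)
    (hdeg : ∀ n, (p n).degree = n)
    (horth : ∀ m n, (∫ x in a..b, (p m).eval x * (p n).eval x * w x)
        = if m = n then 1 else 0)
    (φ : ℕ → ℝ → ℝ)
    (hφ : ∀ n x, φ n x = Real.sqrt (w x) * (p n).eval x)
    (D : ℕ → ℕ → ℝ)
    (hD : ∀ m n, D m n = ∫ x in a..b, deriv (φ m) x * φ n x) :
    ∀ m n, D m n + D n m = 0 := by
  have hwc : Continuous w := hw_smooth.continuous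
  have hwd : Differentiable ℝ w := hw_smooth.differentiable one_ne_zero
  have hw'c : Continuous (deriv w) := hw_smooth.continuous_deriv le_rfl
  -- endpoint values
  have hwa0 : w a = 0 := by
    have h1 : Filter.Tendsto w (nhdsWithin a (Set.Ioi a)) (nhds (w a)) :=
      (hwc.continuousAt).continuousWithinAt.tendsto
    exact tendsto_nhds_unique h1 hwa
  have hwb0 : w b = 0 := by
    have h1 : Filter.Tendsto w (nhdsWithin b (Set.Iio b)) (nhds (w b)) :=
      (hwc.continuousAt).continuousWithinAt.tendsto
    exact tendsto_nhds_unique h1 hwb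
  -- the continuous comparison function
  set g : ℕ → ℕ → ℝ → ℝ := fun m n x =>
    deriv w x / 2 * ((p m).eval x * (p n).eval x)
      + w x * ((Polynomial.derivative (p m)).eval x * (p n).eval x) with hg
  have hgc : ∀ m n, Continuous (g m n) := fun m n => by
    apply Continuous.add
    · exact (hw'c.div_const 2).mul (((p m).continuous_aeval).mul ((p n).continuous_aeval))
    · exact hwc.mul ((((p m).derivative).continuous_aeval).mul ((p n).continuous_aeval))
  -- pointwise identity on Ioo
  have key : ∀ m n, ∀ x ∈ Set.Ioo a b, deriv (φ m) x * φ n x = g m n x := by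
    intro m n x hx
    rcases eq_or_lt_of_le (hw_nonneg x hx) with h0 | hpos
    · -- w x = 0
      have hw0 : w x = 0 := h0.symm
      have hd0 : deriv w x = 0 := by
        have hmin : IsLocalMin w x := by
          filter_upwards [isOpen_Ioo.mem_nhds hx] with y hy
          rw [hw0]; exact hw_nonneg y hy
        exact hmin.deriv_eq_zero
      simp [hφ, hg, hw0, hd0, Real.sqrt_zero]
    · -- w x > 0
      have hs : Real.sqrt (w x) ≠ 0 := by positivity
      have hss : Real.sqrt (w x) * Real.sqrt (w x) = w x := Real.mul_self_sqrt hpos.le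
      have hsq : HasDerivAt (fun y => Real.sqrt (w y))
          (deriv w x / (2 * Real.sqrt (w x))) x :=
        (hwd x).hasDerivAt.sqrt (ne_of_gt hpos)
      have hφm : HasDerivAt (φ m)
          (deriv w x / (2 * Real.sqrt (w x)) * (p m).eval x
            + Real.sqrt (w x) * (Polynomial.derivative (p m)).eval x) x := by
        have hfun : φ m = fun y => Real.sqrt (w y) * (p m).eval y := funext (hφ m)
        rw [hfun]
        exact hsq.mul ((p m).hasDerivAt x)
      rw [hφm.deriv, hφ n x, hg]
      field_simp
      ring_nf
      rw [Real.sq_sqrt hpos.le]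
      ring
  -- D m n equals the integral of g m n
  have hDg : ∀ m n, D m n = ∫ x in a..b, g m n x := by
    intro m n
    rw [hD]
    apply intervalIntegral.integral_congr_ae
    have : {x | ¬ (x ∈ Set.uIoc a b → deriv (φ m) x * φ n x = g m n x)} ⊆ {b} := by
      intro x hx
      simp only [Set.mem_setOf_eq, Classical.not_imp] at hx
      rcases hx with ⟨hx1, hx2⟩
      rw [Set.uIoc_of_le hab.le] at hx1
      by_contra hne
      exact hx2 (key m n x ⟨hx1.1, lt_of_le_of_ne hx1.2 hne⟩)
    exact measure_mono_null this (measure_singleton b)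
  -- FTC for F = w * pm * pn
  intro m n
  have hF : ∀ x ∈ Set.uIcc a b,
      HasDerivAt (fun y => w y * ((p m).eval y * (p n).eval y)) (g m n x + g n m x) x := by
    intro x _
    have h := ((hwd x).hasDerivAt).mul (((p m).hasDerivAt x).mul ((p n).hasDerivAt x))
    refine h.congr_deriv ?_
    rw [hg]
    simp only [Pi.mul_apply]
    ring
  have hint : IntervalIntegrable (fun x => g m n x + g n m x) volume a b :=
    ((hgc m n).add (hgc n m)).intervalIntegrable a b
  have hFTC := intervalIntegral.integral_eq_sub_of_hasDerivAt hF hint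
  rw [hwa0, hwb0] at hFTC
  simp only [zero_mul, sub_zero] at hFTC
  rw [hDg m n, hDg n m,
    ← intervalIntegral.integral_add ((hgc m n).intervalIntegrable a b)
      ((hgc n m).intervalIntegrable a b), hFTC]
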